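/- Let τ = {B₁, …, B_β} be a nonempty finite set of vectors in ℝ^N whose sum is zero (equivalently, whose barycenter is the origin). Then for every Φ in the linear span of τ there exists μ > 0 such that μ·Φ lies in the convex hull of τ. -/

import Mathlib

open BigOperators

theorem stmt_15 {N : ℕ} (τ : Finset (Fin N → ℝ)) (hne : τ.Nonempty)
    (hsum : ∑ v ∈ τ, v = 0) :
    ∀ Φ ∈ Submodule.span ℝ (τ : Set (Fin N → ℝ)),
      ∃ μ : ℝ, 0 < μ ∧ μ • Φ ∈ convexHull ℝ (τ : Set (Fin N → ℝ)) := by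
  intro Φ hΦ
  obtain ⟨f, -, hf⟩ := Submodule.mem_span_finset.mp hΦ
  set β : ℝ := (τ.card : ℝ) with hβ
  have hβpos : 0 < β := by
    simp [hβ, Finset.card_pos, hne]
  set S : ℝ := ∑ v ∈ τ, f v with hS
  set d : (Fin N → ℝ) → ℝ := fun v => f v - S / β with hd
  set C : ℝ := ∑ v ∈ τ, |d v| with hC
  have hC0 : 0 ≤ C := Finset.sum_nonneg fun v _ => abs_nonneg _
  have hCd : ∀ v ∈ τ, |d v| ≤ C := fun v hv =>
    Finset.single_le_sum (fun w _ => abs_nonneg (d w)) hv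
  set μ : ℝ := 1 / (β * (C + 1)) with hμ
  have hden : 0 < β * (C + 1) := mul_pos hβpos (by linarith)
  have hμpos : 0 < μ := by positivity
  refine ⟨μ, hμpos, ?_⟩
  set w : (Fin N → ℝ) → ℝ := fun v => μ * d v + 1 / β with hw
  have hβne : β ≠ 0 := hβpos.ne'
  clear_value β S d C μ w
  have hwnn : ∀ v ∈ τ, 0 ≤ w v := by
    intro v hv
    have habs := abs_le.mp (hCd v hv)
    have h1 : μ * -C ≤ μ * d v := mul_le_mul_of_nonneg_left habs.1 hμpos.le
    rw [mul_neg] at h1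
    have h2 : μ * C ≤ 1 / β := by
      rw [hμ]
      rw [div_mul_eq_mul_div, div_le_div_iff₀ hden hβpos]
      nlinarith
    have : (0:ℝ) ≤ μ * d v + 1 / β := by linarith
    simpa [hw] using this
  have hdsum : ∑ v ∈ τ, d v = 0 := by
    simp only [hd, Finset.sum_sub_distrib, Finset.sum_const, nsmul_eq_mul]
    field_simp
    rw [← hS, ← hβ]
    ring
  have hwsum : ∑ v ∈ τ, w v = 1 := by
    simp only [hw, Finset.sum_add_distrib, ← Finset.mul_sum, hdsum, Finset.sum_const,
      nsmul_eq_mul]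
    field_simp
    rw [← hβ]
    ring
  have hpoint : ∑ v ∈ τ, w v • v = μ • Φ := by
    have : ∑ v ∈ τ, w v • v
        = μ • (∑ v ∈ τ, f v • v) + (1 / β - μ * S / β) • (∑ v ∈ τ, v) := by
      rw [Finset.smul_sum, Finset.smul_sum, ← Finset.sum_add_distrib]
      refine Finset.sum_congr rfl fun v hv => ?_
      simp only [hw, hd, smul_smul]
      rw [← add_smul]
      congr 1
      ring
    rw [this, hf, hsum, smul_zero, add_zero]
  have hmem := τ.centerMass_mem_convexHull (w := w) hwnn (by rw [hwsum]; norm_num)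
    (fun v hv => Finset.mem_coe.mpr hv)
  rw [Finset.centerMass_eq_of_sum_1 _ _ hwsum] at hmem
  rw [← hpoint]
  simpa using hmem
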